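/- For every n-element poset P, the image of the set Λ(P) of all labelings of P under the (n−1)-fold iterate of extended promotion equals the set of linear extensions of P: that is, ∂^{n−1}(L) is a linear extension for every labeling L of P, and every linear extension of P equals ∂^{n−1}(L) for some labeling L of P. -/

import Mathlib

open scoped Classical

noncomputable section

abbrev Labeling (P : Type*) [Fintype P] : Type _ := P ≃ Fin (Fintype.card P)

variable {P : Type*} [Fintype P] [PartialOrder P]

def IsLinearExt (L : Labeling P) : Prop := ∀ x y : P, x ≤ y → L x ≤ L y

def lSucc (L : Labeling P) (v : P)
    (h : (Finset.univ.filter fun y => v < y).Nonempty) : P :=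
  L.symm (((Finset.univ.filter fun y => v < y).image L).min' (h.image _))

lemma lt_lSucc (L : Labeling P) (v : P)
    (h : (Finset.univ.filter fun y => v < y).Nonempty) : v < lSucc L v h := by
  have hmem := Finset.min'_mem ((Finset.univ.filter fun y => v < y).image L) (h.image _)
  obtain ⟨y, hy, hLy⟩ := Finset.mem_image.mp hmem
  have heq : lSucc L v h = y := by
    unfold lSucc
    rw [← hLy, Equiv.symm_apply_apply]
  rw [heq]
  exact (Finset.mem_filter.mp hy).2

def promChainFrom (L : Labeling P) (v : P) : List P :=
  if h : (Finset.univ.filter fun y => v < y).Nonempty then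
    v :: promChainFrom L (lSucc L v h)
  else [v]
termination_by (Finset.univ.filter fun y => v < y).card
decreasing_by
  apply Finset.card_lt_card
  refine (Finset.ssubset_iff_of_subset ?_).mpr ?_
  · intro z hz
    simp only [Finset.mem_filter, Finset.mem_univ, true_and] at *
    exact lt_trans (lt_lSucc L v h) hz
  · exact ⟨lSucc L v h, by simp [lt_lSucc L v h], by simp⟩

def promote (L : Labeling P) : Labeling P :=
  if h : Nonempty P then
    ((List.formPerm (promChainFrom L (L.symm ⟨0, @Fintype.card_pos P _ h⟩))).trans L).trans
      (finRotate (Fintype.card P)).symm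
  else L

/-- The label of `x` under `L`, as an integer in `{1, …, n}`. -/
def labelOf (L : Labeling P) (x : P) : ℕ := (L x : ℕ) + 1

/-- The largest `a ∈ {0, …, n}` such that for all `j ∈ {n−a+1, …, n}`, the set
`{x ∈ P : j ≤ L(x) ≤ n}` is an upper order ideal of `P`. -/
def frozenA (L : Labeling P) : ℕ :=
  sSup {a : ℕ | a ≤ Fintype.card P ∧
    ∀ j, Fintype.card P - a + 1 ≤ j → j ≤ Fintype.card P →
      IsUpperSet {x : P | j ≤ labelOf L x ∧ labelOf L x ≤ Fintype.card P}}

/-- `x` is frozen with respect to `L` if `n − a + 1 ≤ L(x) ≤ n`, where `a` is as in `frozenA`. -/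
def IsFrozen (L : Labeling P) (x : P) : Prop :=
  Fintype.card P - frozenA L + 1 ≤ labelOf L x

/-- A labeling of an `n`-element poset is tangled if `n ≥ 2` and `∂^{n−2}(L)` is
not a linear extension. -/
def IsTangled (L : Labeling P) : Prop :=
  2 ≤ Fintype.card P ∧ ¬ IsLinearExt (promote^[Fintype.card P - 2] L)

/-- A labeling of an `n`-element poset is `k`-untangled if `n ≥ k + 2` and
`∂^{n−k−2}(L)` is not a linear extension. -/
def IsUntangled (k : ℕ) (L : Labeling P) : Prop :=
  k + 2 ≤ Fintype.card P ∧ ¬ IsLinearExt (promote^[Fintype.card P - k - 2] L)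

/-- The comparability graph of a poset. -/
def compGraph (P : Type*) [PartialOrder P] : SimpleGraph P where
  Adj x y := x ≠ y ∧ (x ≤ y ∨ y ≤ x)
  symm := by
    constructor
    intro x y hxy
    exact ⟨hxy.1.symm, hxy.2.symm⟩
  loopless := by
    constructor
    intro x hx
    exact hx.1 rfl

/-- The standardization of an injective map from a finite type into a linear order:
the unique relabeling by `{1, …, n}` with the same relative order of values. -/
def standardize {R β : Type*} [Fintype R] [LinearOrder β]
    (f : R → β) (hf : Function.Injective f) : R ≃ Fin (Fintype.card R) :=
  have hcard : (Finset.univ.image f).card = Fintype.card R := by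
    rw [Finset.card_image_of_injective _ hf, Finset.card_univ]
  (Equiv.ofBijective (fun x => (⟨f x, by simp⟩ : ↥(Finset.univ.image f)))
    (by
      rw [Fintype.bijective_iff_injective_and_card]
      refine ⟨fun a b hab => hf (congrArg Subtype.val hab), ?_⟩
      rw [Fintype.card_coe, hcard])).trans
    ((Finset.univ.image f).orderIsoOfFin hcard).symm.toEquiv

/-- The toggle operator `τ_{k+1}`: it swaps the labels `k+1` and `k+2` (i.e. the
`Fin`-labels `k` and `k+1`) unless `L⁻¹(k+1) <_P L⁻¹(k+2)`. -/
def toggle (L : Labeling P) (k : ℕ) : Labeling P :=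
  if h : k + 1 < Fintype.card P then
    if L.symm ⟨k, Nat.lt_of_succ_lt h⟩ < L.symm ⟨k + 1, h⟩ then L
    else L.trans (Equiv.swap ⟨k, Nat.lt_of_succ_lt h⟩ ⟨k + 1, h⟩)
  else L

/-- An element `x` is `L`-golden if every element strictly above it has a larger label. -/
def IsGolden (L : Labeling P) (x : P) : Prop := ∀ y : P, x < y → L x < L y

/-- The largest label `n` of an `n`-element poset, as an element of `Fin n`. -/
def topFin (P : Type*) [Fintype P] [Nonempty P] : Fin (Fintype.card P) :=
  ⟨Fintype.card P - 1, Nat.sub_lt Fintype.card_pos Nat.one_pos⟩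


/-! ### Auxiliary lemmas for the proof -/

lemma lSucc_le (L : Labeling P) (v : P)
    (h : (Finset.univ.filter fun y => v < y).Nonempty) {y : P} (hy : v < y) :
    L (lSucc L v h) ≤ L y := by
  unfold lSucc
  rw [Equiv.apply_symm_apply]
  exact Finset.min'_le _ _ (Finset.mem_image_of_mem L (by simp [hy]))

lemma promChainFrom_head (L : Labeling P) (v : P) :
    ∃ t, promChainFrom L v = v :: t := by
  rw [promChainFrom]; split <;> exact ⟨_, rfl⟩

lemma promChainFrom_ne_nil (L : Labeling P) (v : P) : promChainFrom L v ≠ [] := by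
  obtain ⟨t, ht⟩ := promChainFrom_head L v; simp [ht]

lemma promChainFrom_chain' (L : Labeling P) (v : P) :
    List.Chain' (fun a b => ∃ h, b = lSucc L a h) (promChainFrom L v) := by
  induction v using promChainFrom.induct (L := L) with
  | case1 v h ih =>
      rw [promChainFrom, dif_pos h]
      obtain ⟨t, ht⟩ := promChainFrom_head L (lSucc L v h)
      rw [ht] at ih ⊢
      exact List.IsChain.cons_cons ⟨h, rfl⟩ ih
  | case2 v h => rw [promChainFrom, dif_neg h]; exact List.isChain_singleton _

lemma promChainFrom_getLast_max (L : Labeling P) (v : P) (y : P) :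
    ¬ (promChainFrom L v).getLast (promChainFrom_ne_nil L v) < y := by
  induction v using promChainFrom.induct (L := L) with
  | case1 v h ih =>
      have hv : promChainFrom L v = v :: promChainFrom L (lSucc L v h) := by
        rw [promChainFrom, dif_pos h]
      have : (promChainFrom L v).getLast (promChainFrom_ne_nil L v)
          = (promChainFrom L (lSucc L v h)).getLast (promChainFrom_ne_nil L _) := by
        rw [List.getLast_congr _ (by simp) hv,
          List.getLast_cons (promChainFrom_ne_nil L _)]
      rw [this]; exact ih
  | case2 v h =>
      have hv : promChainFrom L v = [v] := by rw [promChainFrom, dif_neg h]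
      rw [List.getLast_congr _ (by simp) hv]
      simp only [List.getLast_singleton]
      intro hy
      exact h ⟨y, by simp [hy]⟩


lemma promChainFrom_chain'_lt (L : Labeling P) (v : P) :
    List.Chain' (· < ·) (promChainFrom L v) :=
  (promChainFrom_chain' L v).imp (fun a b ⟨h, hb⟩ => hb ▸ lt_lSucc L a h)

lemma promChainFrom_pairwise (L : Labeling P) (v : P) :
    List.Pairwise (· < ·) (promChainFrom L v) :=
  List.isChain_iff_pairwise.mp (promChainFrom_chain'_lt L v)

lemma promChainFrom_nodup (L : Labeling P) (v : P) : (promChainFrom L v).Nodup :=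
  (promChainFrom_pairwise L v).imp ne_of_lt

lemma promChainFrom_succ (L : Labeling P) (v : P) {i : ℕ}
    (hi : i + 1 < (promChainFrom L v).length) :
    ∃ (h : (Finset.univ.filter fun y => (promChainFrom L v)[i] < y).Nonempty),
      (promChainFrom L v)[i + 1] = lSucc L ((promChainFrom L v)[i]) h := by
  have := List.isChain_iff_getElem.mp (promChainFrom_chain' L v) i (by omega)
  simpa using this

lemma promChainFrom_succ_lt (L : Labeling P) (v : P) {i : ℕ}
    (hi : i + 1 < (promChainFrom L v).length) :
    (promChainFrom L v)[i] < (promChainFrom L v)[i + 1] := by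
  obtain ⟨h, hb⟩ := promChainFrom_succ L v hi
  rw [hb]; exact lt_lSucc L _ h

lemma promChainFrom_succ_min (L : Labeling P) (v : P) {i : ℕ}
    (hi : i + 1 < (promChainFrom L v).length) {y : P}
    (hy : (promChainFrom L v)[i] < y) :
    L ((promChainFrom L v)[i + 1]) ≤ L y := by
  obtain ⟨h, hb⟩ := promChainFrom_succ L v hi
  rw [hb]; exact lSucc_le L _ h hy

lemma finRotate_symm_val {n : ℕ} (k : Fin n) (hk : (k : ℕ) ≠ 0) :
    (((finRotate n).symm k : Fin n) : ℕ) = (k : ℕ) - 1 := by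
  cases n with
  | zero => exact k.elim0
  | succ m =>
    set j := (finRotate (m + 1)).symm k with hj
    have hjk : finRotate (m + 1) j = k := Equiv.apply_symm_apply _ _
    rw [finRotate_succ_apply] at hjk
    have hval : ((j + 1 : Fin (m + 1)) : ℕ) = (k : ℕ) := by rw [hjk]
    rcases eq_or_ne j (Fin.last m) with hjl | hjl
    · exfalso
      apply hk
      rw [← hval, hjl]
      simp [Fin.last_add_one]
    · rw [Fin.val_add_one_of_lt (Fin.lt_last_iff_ne_last.mpr hjl)] at hval
      omega

lemma finRotate_symm_zero_val {n : ℕ} (hn : 0 < n) :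
    (((finRotate n).symm ⟨0, hn⟩ : Fin n) : ℕ) = n - 1 := by
  cases n with
  | zero => omega
  | succ m =>
    have h0 : (⟨0, hn⟩ : Fin (m + 1)) = 0 := rfl
    have : finRotate (m + 1) (Fin.last m) = 0 := by
      rw [finRotate_succ_apply, Fin.last_add_one]
    rw [h0, ← this, Equiv.symm_apply_apply]
    simp

lemma promote_eq (L : Labeling P) (hP : Nonempty P) (x : P) :
    promote L x = (finRotate (Fintype.card P)).symm
      (L ((promChainFrom L (L.symm ⟨0, @Fintype.card_pos P _ hP⟩)).formPerm x)) := by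
  rw [promote, dif_pos hP]
  rfl

lemma head_mem_promChainFrom (L : Labeling P) (v : P) : v ∈ promChainFrom L v := by
  obtain ⟨t, ht⟩ := promChainFrom_head L v
  rw [ht]; exact List.mem_cons_self

lemma promChainFrom_getElem_zero (L : Labeling P) (v : P)
    (h : 0 < (promChainFrom L v).length) : (promChainFrom L v)[0] = v := by
  obtain ⟨t, ht⟩ := promChainFrom_head L v
  simp [ht]

/-- F1 -/
lemma labelOf_promote_of_not_mem (L : Labeling P) (hP : Nonempty P) (x : P)
    (hx : x ∉ promChainFrom L (L.symm ⟨0, @Fintype.card_pos P _ hP⟩)) :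
    labelOf (promote L) x = labelOf L x - 1 ∧ 2 ≤ labelOf L x := by
  have hL0 : (L x : ℕ) ≠ 0 := by
    intro h0
    apply hx
    have : L x = ⟨0, @Fintype.card_pos P _ hP⟩ := Fin.ext h0
    have : x = L.symm ⟨0, @Fintype.card_pos P _ hP⟩ := by
      rw [← this, Equiv.symm_apply_apply]
    rw [this]
    exact head_mem_promChainFrom _ _
  have hfp : (promChainFrom L (L.symm ⟨0, @Fintype.card_pos P _ hP⟩)).formPerm x = x :=
    List.formPerm_apply_of_notMem hx
  unfold labelOf
  rw [promote_eq L hP, hfp, finRotate_symm_val _ hL0]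
  omega

/-- F2 -/
lemma labelOf_promote_getElem (L : Labeling P) (hP : Nonempty P) {i : ℕ}
    (hi : i + 1 < (promChainFrom L (L.symm ⟨0, @Fintype.card_pos P _ hP⟩)).length) :
    labelOf (promote L) ((promChainFrom L (L.symm ⟨0, @Fintype.card_pos P _ hP⟩))[i])
      = labelOf L ((promChainFrom L (L.symm ⟨0, @Fintype.card_pos P _ hP⟩))[i + 1]) - 1 ∧
    2 ≤ labelOf L ((promChainFrom L (L.symm ⟨0, @Fintype.card_pos P _ hP⟩))[i + 1]) := by
  have hfp : (promChainFrom L (L.symm ⟨0, @Fintype.card_pos P _ hP⟩)).formPerm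
      ((promChainFrom L (L.symm ⟨0, @Fintype.card_pos P _ hP⟩))[i])
      = (promChainFrom L (L.symm ⟨0, @Fintype.card_pos P _ hP⟩))[i + 1] :=
    List.formPerm_apply_lt_getElem _ (promChainFrom_nodup L _) i hi
  have hL0 : (L ((promChainFrom L (L.symm ⟨0, @Fintype.card_pos P _ hP⟩))[i + 1]) : ℕ) ≠ 0 := by
    intro h0
    have h1 : L ((promChainFrom L (L.symm ⟨0, @Fintype.card_pos P _ hP⟩))[i + 1])
        = ⟨0, @Fintype.card_pos P _ hP⟩ := Fin.ext h0
    have h2 : (promChainFrom L (L.symm ⟨0, @Fintype.card_pos P _ hP⟩))[i + 1]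
        = L.symm ⟨0, @Fintype.card_pos P _ hP⟩ := (Equiv.eq_symm_apply L).mpr h1
    have h4 : (promChainFrom L (L.symm ⟨0, @Fintype.card_pos P _ hP⟩))[i + 1]
        = (promChainFrom L (L.symm ⟨0, @Fintype.card_pos P _ hP⟩))[0]'(by omega) := by
      rw [h2]
      exact (promChainFrom_getElem_zero L _ (by omega)).symm
    have h5 : i + 1 = 0 :=
      (List.Nodup.getElem_inj_iff (promChainFrom_nodup L _)).mp h4
    omega
  unfold labelOf
  rw [promote_eq L hP, hfp, finRotate_symm_val _ hL0]
  omega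

/-- F3 -/
lemma labelOf_promote_getLast (L : Labeling P) (hP : Nonempty P) :
    labelOf (promote L)
      ((promChainFrom L (L.symm ⟨0, @Fintype.card_pos P _ hP⟩)).getLast
        (promChainFrom_ne_nil L _)) = Fintype.card P := by
  obtain ⟨t, ht⟩ := promChainFrom_head L (L.symm ⟨0, @Fintype.card_pos P _ hP⟩)
  have hfp : (promChainFrom L (L.symm ⟨0, @Fintype.card_pos P _ hP⟩)).formPerm
      ((promChainFrom L (L.symm ⟨0, @Fintype.card_pos P _ hP⟩)).getLast
        (promChainFrom_ne_nil L _)) = L.symm ⟨0, @Fintype.card_pos P _ hP⟩ := by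
    rw [List.getLast_congr _ (by simp [ht]) ht]
    conv_lhs => rw [ht]
    exact List.formPerm_apply_getLast _ t
  unfold labelOf
  rw [promote_eq L hP, hfp, Equiv.apply_symm_apply, finRotate_symm_zero_val]
  have : 0 < Fintype.card P := @Fintype.card_pos P _ hP
  omega


lemma List.getElem_congr'' {α : Type*} (l : List α) {i j : ℕ} (h : i = j)
    (hi : i < l.length) : l[i] = l[j]'(h ▸ hi) := by subst h; rfl

lemma labelOf_le_card (L : Labeling P) (x : P) : labelOf L x ≤ Fintype.card P := by
  unfold labelOf; have := (L x).isLt; omega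

lemma one_le_labelOf (L : Labeling P) (x : P) : 1 ≤ labelOf L x := by
  unfold labelOf; omega

lemma labelOf_mono_min (L : Labeling P) (hP : Nonempty P) {i : ℕ}
    (hi : i + 1 < (promChainFrom L (L.symm ⟨0, @Fintype.card_pos P _ hP⟩)).length) {y : P}
    (hy : (promChainFrom L (L.symm ⟨0, @Fintype.card_pos P _ hP⟩))[i] < y) :
    labelOf L ((promChainFrom L (L.symm ⟨0, @Fintype.card_pos P _ hP⟩))[i + 1]) ≤
      labelOf L y := by
  have := promChainFrom_succ_min L _ hi hy
  unfold labelOf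
  have : ((L ((promChainFrom L (L.symm ⟨0, @Fintype.card_pos P _ hP⟩))[i + 1])) : ℕ)
      ≤ (L y : ℕ) := this
  omega

def InvUp (c : ℕ) (L : Labeling P) : Prop :=
  ∀ j, c ≤ j → IsUpperSet {x : P | j ≤ labelOf L x}

lemma invUp_mono {c c' : ℕ} (h : c ≤ c') {L : Labeling P} (hL : InvUp c L) : InvUp c' L :=
  fun j hj => hL j (le_trans h hj)

lemma invUp_top (L : Labeling P) : InvUp (Fintype.card P + 1) L := by
  intro j hj x y hxy hx
  exfalso
  have := labelOf_le_card L x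
  simp only [Set.mem_setOf_eq] at hx
  omega

lemma invUp_promote {c : ℕ} {L : Labeling P} (hL : InvUp (c + 1) L) :
    InvUp c (promote L) := by
  by_cases hP : Nonempty P
  swap
  · intro j hj x
    exact (hP ⟨x⟩).elim
  intro j hj x y hxy hx
  simp only [Set.mem_setOf_eq] at hx ⊢
  rcases eq_or_lt_of_le hxy with rfl | hlt
  · exact hx
  -- Step A : j + 1 ≤ labelOf L y
  have hA : j + 1 ≤ labelOf L y := by
    by_cases hxC : x ∈ promChainFrom L (L.symm ⟨0, @Fintype.card_pos P _ hP⟩)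
    · obtain ⟨i, hilen, hieq⟩ := List.mem_iff_getElem.mp hxC
      rcases eq_or_lt_of_le (Nat.succ_le_of_lt hilen) with hlast | hsucc
      · -- x is the last element of the chain, hence maximal: contradiction
        exfalso
        apply promChainFrom_getLast_max L (L.symm ⟨0, @Fintype.card_pos P _ hP⟩) y
        rw [List.getLast_eq_getElem]
        rw [List.getElem_congr'' _ (show (promChainFrom L
          (L.symm ⟨0, @Fintype.card_pos P _ hP⟩)).length - 1 = i by omega)]
        rw [hieq]
        exact hlt
      · -- x = C[i] with i+1 < len
        have hF2 := labelOf_promote_getElem L hP (i := i) hsucc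
        rw [hieq] at hF2
        have h1 : j + 1 ≤ labelOf L
            ((promChainFrom L (L.symm ⟨0, @Fintype.card_pos P _ hP⟩))[i + 1]) := by
          omega
        have h2 := labelOf_mono_min L hP hsucc (y := y) (by rw [hieq]; exact hlt)
        omega
    · have hF1 := labelOf_promote_of_not_mem L hP x hxC
      have hxU : j + 1 ≤ labelOf L x := by omega
      have := hL (j + 1) (by omega) (le_of_lt hlt) (Set.mem_setOf_eq ▸ hxU)
      simpa using this
  -- Step B : j ≤ labelOf (promote L) y
  by_cases hyC : y ∈ promChainFrom L (L.symm ⟨0, @Fintype.card_pos P _ hP⟩)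
  · obtain ⟨i, hilen, hieq⟩ := List.mem_iff_getElem.mp hyC
    rcases eq_or_lt_of_le (Nat.succ_le_of_lt hilen) with hlast | hsucc
    · -- y is the last element: new label is n
      have hF3 := labelOf_promote_getLast L hP
      have hyl : y = (promChainFrom L (L.symm ⟨0, @Fintype.card_pos P _ hP⟩)).getLast
          (promChainFrom_ne_nil L _) := by
        rw [List.getLast_eq_getElem]
        rw [List.getElem_congr'' _ (show (promChainFrom L
          (L.symm ⟨0, @Fintype.card_pos P _ hP⟩)).length - 1 = i by omega)]
        rw [hieq]
      rw [hyl, hF3]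
      have := labelOf_le_card L y
      omega
    · -- y = C[i], i+1 < len; C[i+1] > y so it is in U_{j+1}
      have hlt2 : y < (promChainFrom L (L.symm ⟨0, @Fintype.card_pos P _ hP⟩))[i + 1] := by
        rw [← hieq]; exact promChainFrom_succ_lt L _ hsucc
      have hU := hL (j + 1) (by omega) (le_of_lt hlt2) (by
        simp only [Set.mem_setOf_eq]; exact hA)
      simp only [Set.mem_setOf_eq] at hU
      have hF2 := labelOf_promote_getElem L hP (i := i) hsucc
      rw [hieq] at hF2
      omega
  · have hF1 := labelOf_promote_of_not_mem L hP y hyC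
    omega

lemma invUp_iterate (L : Labeling P) (k : ℕ) :
    InvUp (Fintype.card P + 1 - k) (promote^[k] L) := by
  induction k with
  | zero => exact invUp_top L
  | succ k ih =>
    rw [Function.iterate_succ_apply']
    have h1 : InvUp (Fintype.card P - k + 1) (promote^[k] L) :=
      invUp_mono (by omega) ih
    have := invUp_promote h1
    exact invUp_mono (by omega) this

lemma isLinearExt_of_invUp {L : Labeling P} (h : InvUp 2 L) : IsLinearExt L := by
  intro x y hxy
  rw [Fin.le_def]
  by_cases h0 : (L x : ℕ) = 0
  · omega
  · have h2 : 2 ≤ labelOf L x := by unfold labelOf; omega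
    have := h (labelOf L x) h2 hxy (by simp only [Set.mem_setOf_eq]; exact le_rfl)
    simp only [Set.mem_setOf_eq] at this
    unfold labelOf at this
    omega

lemma isLinearExt_promote_iterate (L : Labeling P) :
    IsLinearExt (promote^[Fintype.card P - 1] L) := by
  have := invUp_iterate L (Fintype.card P - 1)
  exact isLinearExt_of_invUp (invUp_mono (by omega) this)


/-! ### Demotion machinery -/

def lPred (L : Labeling P) (v : P)
    (h : (Finset.univ.filter fun y => y < v).Nonempty) : P :=
  L.symm (((Finset.univ.filter fun y => y < v).image L).max' (h.image _))

lemma lPred_lt (L : Labeling P) (v : P)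
    (h : (Finset.univ.filter fun y => y < v).Nonempty) : lPred L v h < v := by
  have hmem := Finset.max'_mem ((Finset.univ.filter fun y => y < v).image L) (h.image _)
  obtain ⟨y, hy, hLy⟩ := Finset.mem_image.mp hmem
  have heq : lPred L v h = y := by
    unfold lPred
    rw [← hLy, Equiv.symm_apply_apply]
  rw [heq]
  exact (Finset.mem_filter.mp hy).2

lemma le_lPred (L : Labeling P) (v : P)
    (h : (Finset.univ.filter fun y => y < v).Nonempty) {y : P} (hy : y < v) :
    L y ≤ L (lPred L v h) := by
  unfold lPred
  rw [Equiv.apply_symm_apply]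
  exact Finset.le_max' _ _ (Finset.mem_image_of_mem L (by simp [hy]))

def demChainFrom (L : Labeling P) (v : P) : List P :=
  if h : (Finset.univ.filter fun y => y < v).Nonempty then
    v :: demChainFrom L (lPred L v h)
  else [v]
termination_by (Finset.univ.filter fun y => y < v).card
decreasing_by
  apply Finset.card_lt_card
  refine (Finset.ssubset_iff_of_subset ?_).mpr ?_
  · intro z hz
    simp only [Finset.mem_filter, Finset.mem_univ, true_and] at *
    exact lt_trans hz (lPred_lt L v h)
  · exact ⟨lPred L v h, by simp [lPred_lt L v h], by simp⟩

def topIdx (hP : Nonempty P) : Fin (Fintype.card P) :=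
  ⟨Fintype.card P - 1, Nat.sub_lt (@Fintype.card_pos P _ hP) Nat.one_pos⟩

def demote (L : Labeling P) : Labeling P :=
  if h : Nonempty P then
    ((List.formPerm (demChainFrom L (L.symm (topIdx h)))).trans L).trans
      (finRotate (Fintype.card P))
  else L

lemma demChainFrom_head (L : Labeling P) (v : P) :
    ∃ t, demChainFrom L v = v :: t := by
  rw [demChainFrom]; split <;> exact ⟨_, rfl⟩

lemma demChainFrom_ne_nil (L : Labeling P) (v : P) : demChainFrom L v ≠ [] := by
  obtain ⟨t, ht⟩ := demChainFrom_head L v; simp [ht]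

lemma demChainFrom_chain' (L : Labeling P) (v : P) :
    List.Chain' (fun a b => ∃ h, b = lPred L a h) (demChainFrom L v) := by
  induction v using demChainFrom.induct (L := L) with
  | case1 v h ih =>
      rw [demChainFrom, dif_pos h]
      obtain ⟨t, ht⟩ := demChainFrom_head L (lPred L v h)
      rw [ht] at ih ⊢
      exact List.IsChain.cons_cons ⟨h, rfl⟩ ih
  | case2 v h => rw [demChainFrom, dif_neg h]; exact List.isChain_singleton _

lemma demChainFrom_getLast_min (L : Labeling P) (v : P) (y : P) :
    ¬ y < (demChainFrom L v).getLast (demChainFrom_ne_nil L v) := by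
  induction v using demChainFrom.induct (L := L) with
  | case1 v h ih =>
      have hv : demChainFrom L v = v :: demChainFrom L (lPred L v h) := by
        rw [demChainFrom, dif_pos h]
      have : (demChainFrom L v).getLast (demChainFrom_ne_nil L v)
          = (demChainFrom L (lPred L v h)).getLast (demChainFrom_ne_nil L _) := by
        rw [List.getLast_congr _ (by simp) hv,
          List.getLast_cons (demChainFrom_ne_nil L _)]
      rw [this]; exact ih
  | case2 v h =>
      have hv : demChainFrom L v = [v] := by rw [demChainFrom, dif_neg h]
      rw [List.getLast_congr _ (by simp) hv]
      simp only [List.getLast_singleton]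
      intro hy
      exact h ⟨y, by simp [hy]⟩

lemma demChainFrom_chain'_gt (L : Labeling P) (v : P) :
    List.Chain' (· > ·) (demChainFrom L v) :=
  (demChainFrom_chain' L v).imp (fun a _ ⟨h, hb⟩ => hb ▸ lPred_lt L a h)

lemma demChainFrom_pairwise (L : Labeling P) (v : P) :
    List.Pairwise (· > ·) (demChainFrom L v) :=
  List.isChain_iff_pairwise.mp (demChainFrom_chain'_gt L v)

lemma demChainFrom_nodup (L : Labeling P) (v : P) : (demChainFrom L v).Nodup :=
  (demChainFrom_pairwise L v).imp ne_of_gt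

lemma demChainFrom_getElem_zero (L : Labeling P) (v : P)
    (h : 0 < (demChainFrom L v).length) : (demChainFrom L v)[0] = v := by
  obtain ⟨t, ht⟩ := demChainFrom_head L v
  simp [ht]

lemma demChainFrom_succ (L : Labeling P) (v : P) {i : ℕ}
    (hi : i + 1 < (demChainFrom L v).length) :
    ∃ (h : (Finset.univ.filter fun y => y < (demChainFrom L v)[i]).Nonempty),
      (demChainFrom L v)[i + 1] = lPred L ((demChainFrom L v)[i]) h := by
  have := List.isChain_iff_getElem.mp (demChainFrom_chain' L v) i (by omega)
  simpa using this

lemma demChainFrom_succ_lt (L : Labeling P) (v : P) {i : ℕ}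
    (hi : i + 1 < (demChainFrom L v).length) :
    (demChainFrom L v)[i + 1] < (demChainFrom L v)[i] := by
  obtain ⟨h, hb⟩ := demChainFrom_succ L v hi
  rw [hb]; exact lPred_lt L _ h

lemma demChainFrom_succ_max (L : Labeling P) (v : P) {i : ℕ}
    (hi : i + 1 < (demChainFrom L v).length) {y : P}
    (hy : y < (demChainFrom L v)[i]) :
    L y ≤ L ((demChainFrom L v)[i + 1]) := by
  obtain ⟨h, hb⟩ := demChainFrom_succ L v hi
  rw [hb]; exact le_lPred L _ h hy

lemma finRotate_val {n : ℕ} (k : Fin n) (hk : (k : ℕ) + 1 < n) :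
    ((finRotate n k : Fin n) : ℕ) = (k : ℕ) + 1 := by
  cases n with
  | zero => exact k.elim0
  | succ m =>
    rw [finRotate_succ_apply]
    exact Fin.val_add_one_of_lt (by rw [Fin.lt_iff_val_lt_val]; simp; omega)

lemma finRotate_val_last {n : ℕ} (k : Fin n) (hk : (k : ℕ) = n - 1) :
    ((finRotate n k : Fin n) : ℕ) = 0 := by
  cases n with
  | zero => exact k.elim0
  | succ m =>
    have : k = Fin.last m := Fin.ext (by simpa using hk)
    rw [this, finRotate_succ_apply, Fin.last_add_one]
    rfl

lemma demote_eq (L : Labeling P) (hP : Nonempty P) (x : P) :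
    demote L x = finRotate (Fintype.card P)
      (L ((demChainFrom L (L.symm (topIdx hP))).formPerm x)) := by
  rw [demote, dif_pos hP]
  rfl

lemma head_mem_demChainFrom (L : Labeling P) (v : P) : v ∈ demChainFrom L v := by
  obtain ⟨t, ht⟩ := demChainFrom_head L v
  rw [ht]; exact List.mem_cons_self

/-- G1 -/
lemma demote_val_of_not_mem (L : Labeling P) (hP : Nonempty P) (x : P)
    (hx : x ∉ demChainFrom L (L.symm (topIdx hP))) :
    ((demote L x : Fin (Fintype.card P)) : ℕ) = (L x : ℕ) + 1 := by
  have hLt : (L x : ℕ) ≠ Fintype.card P - 1 := by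
    intro h0
    apply hx
    have h1 : L x = topIdx hP := Fin.ext h0
    have h2 : x = L.symm (topIdx hP) := (Equiv.eq_symm_apply L).mpr h1
    rw [h2]
    exact head_mem_demChainFrom _ _
  have hfp : (demChainFrom L (L.symm (topIdx hP))).formPerm x = x :=
    List.formPerm_apply_of_notMem hx
  rw [demote_eq L hP, hfp, finRotate_val]
  have := (L x).isLt
  omega

/-- G2 -/
lemma demote_val_getElem (L : Labeling P) (hP : Nonempty P) {i : ℕ}
    (hi : i + 1 < (demChainFrom L (L.symm (topIdx hP))).length) :
    ((demote L ((demChainFrom L (L.symm (topIdx hP)))[i]) : Fin (Fintype.card P)) : ℕ)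
      = (L ((demChainFrom L (L.symm (topIdx hP)))[i + 1]) : ℕ) + 1 := by
  have hfp : (demChainFrom L (L.symm (topIdx hP))).formPerm
      ((demChainFrom L (L.symm (topIdx hP)))[i])
      = (demChainFrom L (L.symm (topIdx hP)))[i + 1] :=
    List.formPerm_apply_lt_getElem _ (demChainFrom_nodup L _) i hi
  have hLt : (L ((demChainFrom L (L.symm (topIdx hP)))[i + 1]) : ℕ) ≠ Fintype.card P - 1 := by
    intro h0
    have h1 : L ((demChainFrom L (L.symm (topIdx hP)))[i + 1]) = topIdx hP := Fin.ext h0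
    have h2 : (demChainFrom L (L.symm (topIdx hP)))[i + 1] = L.symm (topIdx hP) :=
      (Equiv.eq_symm_apply L).mpr h1
    have h4 : (demChainFrom L (L.symm (topIdx hP)))[i + 1]
        = (demChainFrom L (L.symm (topIdx hP)))[0]'(by omega) := by
      rw [h2]
      exact (demChainFrom_getElem_zero L _ (by omega)).symm
    have h5 : i + 1 = 0 :=
      (List.Nodup.getElem_inj_iff (demChainFrom_nodup L _)).mp h4
    omega
  rw [demote_eq L hP, hfp, finRotate_val]
  have := (L ((demChainFrom L (L.symm (topIdx hP)))[i + 1])).isLt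
  omega

/-- G3 -/
lemma demote_getLast (L : Labeling P) (hP : Nonempty P) :
    demote L ((demChainFrom L (L.symm (topIdx hP))).getLast
      (demChainFrom_ne_nil L _)) = ⟨0, @Fintype.card_pos P _ hP⟩ := by
  obtain ⟨t, ht⟩ := demChainFrom_head L (L.symm (topIdx hP))
  have hfp : (demChainFrom L (L.symm (topIdx hP))).formPerm
      ((demChainFrom L (L.symm (topIdx hP))).getLast (demChainFrom_ne_nil L _))
      = L.symm (topIdx hP) := by
    rw [List.getLast_congr _ (by simp [ht]) ht]
    conv_lhs => rw [ht]
    exact List.formPerm_apply_getLast _ t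
  rw [demote_eq L hP, hfp, Equiv.apply_symm_apply]
  apply Fin.ext
  rw [finRotate_val_last]
  rfl


lemma demChainFrom_anti (L : Labeling P) (v : P) {i j : ℕ} (hij : i ≤ j)
    (hj : j < (demChainFrom L v).length) :
    (demChainFrom L v)[j] ≤ (demChainFrom L v)[i]'(by omega) := by
  rcases eq_or_lt_of_le hij with rfl | h'
  · exact le_rfl
  · exact le_of_lt (List.pairwise_iff_getElem.mp (demChainFrom_pairwise L v)
      i j (by omega) hj h')

lemma le_val_of_isLinearExt {L : Labeling P} (hL : IsLinearExt L) {a b : P} (hab : a ≤ b) :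
    (L a : ℕ) ≤ (L b : ℕ) := by
  have h1 := hL a b hab
  rwa [Fin.le_def] at h1

lemma isLinearExt_demote {L : Labeling P} (hL : IsLinearExt L) :
    IsLinearExt (demote L) := by
  by_cases hP : Nonempty P
  swap
  · intro x; exact (hP ⟨x⟩).elim
  intro x y hxy
  rcases eq_or_lt_of_le hxy with rfl | hlt
  · exact le_rfl
  rw [Fin.le_def]
  have hpw := List.pairwise_iff_getElem.mp (demChainFrom_pairwise L (L.symm (topIdx hP)))
  by_cases hxD : x ∈ demChainFrom L (L.symm (topIdx hP))
  · obtain ⟨i, hilen, hieq⟩ := List.mem_iff_getElem.mp hxD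
    rcases eq_or_lt_of_le (Nat.succ_le_of_lt hilen) with hlast | hsucc
    · -- x is the last element of the down-chain: its demote-value is 0
      have hxl : x = (demChainFrom L (L.symm (topIdx hP))).getLast
          (demChainFrom_ne_nil L _) := by
        rw [List.getLast_eq_getElem]
        rw [List.getElem_congr'' _ (show (demChainFrom L
          (L.symm (topIdx hP))).length - 1 = i by omega)]
        rw [hieq]
      rw [hxl, demote_getLast L hP]
      simp
    · have hx2 := demote_val_getElem L hP (i := i) hsucc
      rw [hieq] at hx2
      rw [hx2]
      by_cases hyD : y ∈ demChainFrom L (L.symm (topIdx hP))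
      · obtain ⟨j, hjlen, hjeq⟩ := List.mem_iff_getElem.mp hyD
        have hji : j < i := by
          rcases lt_trichotomy i j with h' | h' | h'
          · exfalso
            have := hpw i j hilen hjlen h'
            rw [hieq, hjeq] at this
            exact absurd (hlt.trans this) (lt_irrefl x)
          · exfalso
            have hxy' : x = y := by
              rw [← hieq, ← hjeq]; exact List.getElem_congr'' _ h' _
            exact absurd hxy' (ne_of_lt hlt)
          · exact h'
        have hy2 := demote_val_getElem L hP (i := j) (by omega)
        rw [hjeq] at hy2
        rw [hy2]
        have hle : (demChainFrom L (L.symm (topIdx hP)))[i + 1]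
            ≤ (demChainFrom L (L.symm (topIdx hP)))[j + 1]'(by omega) :=
          demChainFrom_anti L _ (by omega) hsucc
        exact Nat.add_le_add_right (le_val_of_isLinearExt hL hle) 1
      · have hy2 := demote_val_of_not_mem L hP y hyD
        rw [hy2]
        have hle : (demChainFrom L (L.symm (topIdx hP)))[i + 1] ≤ y := by
          have h1 : (demChainFrom L (L.symm (topIdx hP)))[i + 1] < x := by
            rw [← hieq]; exact demChainFrom_succ_lt L _ hsucc
          exact (h1.trans hlt).le
        exact Nat.add_le_add_right (le_val_of_isLinearExt hL hle) 1
  · have hx2 := demote_val_of_not_mem L hP x hxD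
    rw [hx2]
    by_cases hyD : y ∈ demChainFrom L (L.symm (topIdx hP))
    · obtain ⟨j, hjlen, hjeq⟩ := List.mem_iff_getElem.mp hyD
      rcases eq_or_lt_of_le (Nat.succ_le_of_lt hjlen) with hlast | hsucc
      · exfalso
        apply demChainFrom_getLast_min L (L.symm (topIdx hP)) x
        rw [List.getLast_eq_getElem]
        rw [List.getElem_congr'' _ (show (demChainFrom L
          (L.symm (topIdx hP))).length - 1 = j by omega)]
        rw [hjeq]
        exact hlt
      · have hy2 := demote_val_getElem L hP (i := j) hsucc
        rw [hjeq] at hy2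
        rw [hy2]
        have := demChainFrom_succ_max L (L.symm (topIdx hP)) hsucc
          (y := x) (by rw [hjeq]; exact hlt)
        rw [Fin.le_def] at this
        omega
    · have hy2 := demote_val_of_not_mem L hP y hyD
      rw [hy2]
      have := le_val_of_isLinearExt hL hlt.le
      omega

lemma lSucc_eq (L : Labeling P) {v b : P} (hvb : v < b)
    (hmin : ∀ z, v < z → L b ≤ L z) :
    lSucc L v ⟨b, by simp [hvb]⟩ = b := by
  unfold lSucc
  rw [Equiv.symm_apply_eq]
  apply le_antisymm
  · exact Finset.min'_le _ _ (Finset.mem_image_of_mem L (by simp [hvb]))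
  · apply Finset.le_min'
    intro z hz
    obtain ⟨w, hw, rfl⟩ := Finset.mem_image.mp hz
    exact hmin w (by simpa using (Finset.mem_filter.mp hw).2)

lemma promChainFrom_eq_of (L : Labeling P) :
    ∀ (C : List P) (hC : C ≠ []),
      List.Chain' (fun a b => ∃ h, b = lSucc L a h) C →
      ¬ (Finset.univ.filter fun y => C.getLast hC < y).Nonempty →
      promChainFrom L (C.head hC) = C
  | [a], _, _, hlast => by
      rw [List.head_cons, promChainFrom, dif_neg (by simp only [List.getLast_singleton] at hlast; exact hlast)]
  | a :: b :: t, _, hchain, hlast => by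
      obtain ⟨⟨h, hb⟩, hrest⟩ := List.isChain_cons_cons.mp hchain
      rw [List.head_cons, promChainFrom, dif_pos h]
      congr 1
      have hrec := promChainFrom_eq_of L (b :: t) (by simp) hrest
        (by
          rw [List.getLast_cons (by simp : (b :: t) ≠ [])] at hlast
          exact hlast)
      rw [List.head_cons] at hrec
      rw [← hb]
      exact hrec

set_option maxHeartbeats 1000000 in
lemma promChainFrom_demote (L : Labeling P) (hP : Nonempty P) (hL : IsLinearExt L) :
    promChainFrom (demote L) ((demote L).symm ⟨0, @Fintype.card_pos P _ hP⟩)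
      = (demChainFrom L (L.symm (topIdx hP))).reverse := by
  have hne : (demChainFrom L (L.symm (topIdx hP))).reverse ≠ [] := by
    simp [demChainFrom_ne_nil]
  have hchain : List.Chain' (fun a b => ∃ h, b = lSucc (demote L) a h)
      (demChainFrom L (L.symm (topIdx hP))).reverse := by
    change List.IsChain _ _
    rw [List.isChain_reverse]
    apply List.isChain_iff_getElem.mpr
    intro i hi
    have hi' : i + 1 < (demChainFrom L (L.symm (topIdx hP))).length := by omega
    have hvb : (demChainFrom L (L.symm (topIdx hP)))[i + 1]
        < (demChainFrom L (L.symm (topIdx hP)))[i] := demChainFrom_succ_lt L _ hi'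
    have hmin : ∀ z, (demChainFrom L (L.symm (topIdx hP)))[i + 1] < z →
        demote L ((demChainFrom L (L.symm (topIdx hP)))[i]) ≤ demote L z := by
      intro z hz
      rw [Fin.le_def]
      have hx2 := demote_val_getElem L hP (i := i) hi'
      rw [hx2]
      by_cases hzD : z ∈ demChainFrom L (L.symm (topIdx hP))
      · obtain ⟨s, hslen, hseq⟩ := List.mem_iff_getElem.mp hzD
        have hpw := List.pairwise_iff_getElem.mp
          (demChainFrom_pairwise L (L.symm (topIdx hP)))
        have hsi : s < i + 1 := by
          rcases lt_trichotomy s (i + 1) with h' | h' | h'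
          · exact h'
          · exfalso
            have hz' : (demChainFrom L (L.symm (topIdx hP)))[i + 1] = z := by
              rw [← hseq]; exact List.getElem_congr'' _ h'.symm _
            exact absurd hz (by rw [hz']; exact lt_irrefl _)
          · exfalso
            have := hpw (i + 1) s hi' hslen h'
            rw [hseq] at this
            exact absurd (hz.trans this) (lt_irrefl _)
        have hz2 := demote_val_getElem L hP (i := s) (by omega)
        rw [hseq] at hz2
        rw [hz2]
        have hle : (demChainFrom L (L.symm (topIdx hP)))[i + 1]
            ≤ (demChainFrom L (L.symm (topIdx hP)))[s + 1]'(by omega) :=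
          demChainFrom_anti L _ (by omega) hi'
        exact Nat.add_le_add_right (le_val_of_isLinearExt hL hle) 1
      · have hz2 := demote_val_of_not_mem L hP z hzD
        rw [hz2]
        exact Nat.add_le_add_right (le_val_of_isLinearExt hL hz.le) 1
    exact ⟨_, (lSucc_eq (demote L) hvb hmin).symm⟩
  have hheadD : (demChainFrom L (L.symm (topIdx hP))).head
      (demChainFrom_ne_nil L _) = L.symm (topIdx hP) := by
    obtain ⟨t, ht⟩ := demChainFrom_head L (L.symm (topIdx hP))
    simp [ht]
  have hlast : ¬ (Finset.univ.filter fun y =>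
      (demChainFrom L (L.symm (topIdx hP))).reverse.getLast hne < y).Nonempty := by
    rintro ⟨y, hy⟩
    simp only [Finset.mem_filter, Finset.mem_univ, true_and] at hy
    rw [List.getLast_reverse, hheadD] at hy
    have h1 := le_val_of_isLinearExt hL hy.le
    rw [Equiv.apply_symm_apply] at h1
    have h2 : (L y : ℕ) < Fintype.card P := (L y).isLt
    have h3 : (topIdx hP : ℕ) = Fintype.card P - 1 := rfl
    have hcard : 0 < Fintype.card P := @Fintype.card_pos P _ hP
    have h4 : L y = topIdx hP := Fin.ext (by omega)
    have h5 : y = L.symm (topIdx hP) := (Equiv.eq_symm_apply L).mpr h4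
    rw [h5] at hy
    exact absurd hy (lt_irrefl _)
  have hmain := promChainFrom_eq_of (demote L) _ hne hchain hlast
  have hhead : (demChainFrom L (L.symm (topIdx hP))).reverse.head hne
      = (demote L).symm ⟨0, @Fintype.card_pos P _ hP⟩ := by
    rw [List.head_reverse]
    symm
    exact (Equiv.symm_apply_eq _).mpr (demote_getLast L hP).symm
  rw [hhead] at hmain
  exact hmain

set_option maxHeartbeats 1000000 in
lemma promote_demote (L : Labeling P) (hL : IsLinearExt L) : promote (demote L) = L := by
  by_cases hP : Nonempty P
  swap
  · rw [promote, dif_neg hP, demote, dif_neg hP]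
  apply Equiv.ext
  intro x
  rw [promote_eq _ hP]
  have hC := promChainFrom_demote L hP hL
  rw [hC, List.formPerm_reverse, demote_eq L hP,
    ← Equiv.Perm.mul_apply (demChainFrom L (L.symm (topIdx hP))).formPerm, mul_inv_cancel,
    Equiv.Perm.one_apply,
    Equiv.symm_apply_apply]


/-- `∂^{n−1}(Λ(P)) = ℒ(P)`: the `(n−1)`-st iterate of extended
promotion of any labeling is a linear extension, and every linear extension
arises this way. -/
theorem promote_iterate_image_eq_linearExt :
    (∀ L : Labeling P, IsLinearExt (promote^[Fintype.card P - 1] L)) ∧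
      (∀ L' : Labeling P, IsLinearExt L' →
        ∃ L : Labeling P, promote^[Fintype.card P - 1] L = L') := by
  constructor
  · exact isLinearExt_promote_iterate
  · intro L' hL'
    refine ⟨demote^[Fintype.card P - 1] L', ?_⟩
    have key : ∀ k (X : Labeling P), IsLinearExt X →
        IsLinearExt (demote^[k] X) ∧ promote^[k] (demote^[k] X) = X := by
      intro k
      induction k with
      | zero => intro X hX; exact ⟨hX, rfl⟩
      | succ k ih =>
        intro X hX
        obtain ⟨h2, h3⟩ := ih (demote X) (isLinearExt_demote hX)
        refine ⟨?_, ?_⟩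
        · rw [Function.iterate_succ_apply]; exact h2
        · rw [Function.iterate_succ_apply', Function.iterate_succ_apply, h3]
          exact promote_demote X hX
    exact (key _ L' hL').2

end
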